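/- Rank-one second-step lemma: with D the BC₁ Cherednik operator with parameters ι, b > 0 and ρ = ι + b, for every real δ and t ≠ 0, (D − (δ + ρ)) applied to g(t) = (cosh t)^{δ−1}·e^t equals (1 − δ − ι)·(1 − tanh t)·(cosh t)^{δ−1}·e^t. -/

import Mathlib

/-- The BC₁ Cherednik operator with multiplicity parameters ι, b. -/
noncomputable def cherednikBC1 (ι b : ℝ) (f : ℝ → ℝ) : ℝ → ℝ := fun t =>
  deriv f t +
    (2 * ι * (Real.exp (2 * t) / (Real.exp (2 * t) - Real.exp (-(2 * t)))) +
      2 * b * (Real.exp t / (Real.exp t - Real.exp (-t)))) * (f t - f (-t)) -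
    (ι + b) * f t

theorem second_step_BC1 (ι b : ℝ) (hι : 0 < ι) (hb : 0 < b) (δ : ℝ)
    (t : ℝ) (ht : t ≠ 0) :
    cherednikBC1 ι b (fun s => Real.cosh s ^ (δ - 1) * Real.exp s) t -
        (δ + (ι + b)) * (Real.cosh t ^ (δ - 1) * Real.exp t)
      = (1 - δ - ι) * (1 - Real.tanh t) * (Real.cosh t ^ (δ - 1) * Real.exp t) := by
  have hc : (0:ℝ) < Real.cosh t := Real.cosh_pos t
  have hd : HasDerivAt (fun s => Real.cosh s ^ (δ - 1) * Real.exp s)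
      ((Real.sinh t * (δ - 1) * Real.cosh t ^ (δ - 1 - 1)) * Real.exp t
        + Real.cosh t ^ (δ - 1) * Real.exp t) t :=
    ((Real.hasDerivAt_cosh t).rpow_const (Or.inl hc.ne')).mul (Real.hasDerivAt_exp t)
  have hE : Real.exp t ≠ 0 := (Real.exp_pos t).ne'
  have hE1 : Real.exp t ≠ 1 := fun h =>
    ht (Real.exp_injective (h.trans Real.exp_zero.symm))
  have hcr : Real.cosh t ^ (δ - 1 - 1) = Real.cosh t ^ (δ - 1) / Real.cosh t := by
    rw [Real.rpow_sub hc, Real.rpow_one]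
  have he2 : Real.exp (2 * t) = Real.exp t * Real.exp t := by
    rw [two_mul, Real.exp_add]
  have hne : Real.exp t * Real.exp t - 1 ≠ 0 := by
    intro h
    have h1 : (Real.exp t - 1) * (Real.exp t + 1) = 0 := by nlinarith
    rcases mul_eq_zero.mp h1 with h' | h'
    · exact hE1 (by linarith)
    · linarith [Real.exp_pos t]
  unfold cherednikBC1
  rw [hd.deriv]
  simp only []
  rw [hcr, Real.tanh_eq_sinh_div_cosh, Real.sinh_eq, Real.cosh_neg]
  set C := Real.cosh t ^ (δ - 1) with hC
  rw [Real.cosh_eq]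
  simp only [Real.exp_neg, he2]
  rw [show Real.exp t - (Real.exp t)⁻¹ = (Real.exp t * Real.exp t - 1) / Real.exp t by
        field_simp,
      show Real.exp t * Real.exp t - (Real.exp t * Real.exp t)⁻¹
          = ((Real.exp t * Real.exp t - 1) * (Real.exp t * Real.exp t + 1)) / (Real.exp t * Real.exp t) by
        field_simp; ring,
      show Real.exp t + (Real.exp t)⁻¹ = (Real.exp t * Real.exp t + 1) / Real.exp t by
        field_simp]
  have hpos : Real.exp t * Real.exp t + 1 ≠ 0 := by positivity
  have hne2 : Real.exp t ^ 2 - 1 ≠ 0 := by rw [sq]; exact hne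
  field_simp
  ring
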